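/- Let K: ℝ^d → [0,∞) be continuous and nonnegative. Then the interaction functional (ρ₁,ρ₂) ↦ ∫ ρ₁ (K∗ρ₂) dx is lower semi-continuous with respect to weak L¹(ℝ^d)-convergence of the pair (ρ₁,ρ₂), where both components are probability densities. -/

import Mathlib

open MeasureTheory Filter Metric Set Topology

variable {d : ℕ}
local notation "E" => EuclideanSpace ℝ (Fin d)

lemma aux_int_mul_bdd {ρ g : E → ℝ} (hρ : Integrable ρ)
    (hg : AEStronglyMeasurable g volume) {C : ℝ} (hC : ∀ x, |g x| ≤ C) :
    Integrable (fun x => ρ x * g x) := by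
  have := hρ.bdd_mul hg (Filter.Eventually.of_forall fun x => by simpa [Real.norm_eq_abs] using hC x)
  simpa [mul_comm] using this

lemma aux_meas_param (τ f : E → ℝ) (hτ : Measurable τ) (hf : Continuous f)
    (ν : Measure E) [SFinite ν] :
    StronglyMeasurable (fun x : E => ∫ y, τ y * f (x - y) ∂ν) :=
  StronglyMeasurable.integral_prod_right (f := fun x y : E => τ y * f (x - y))
    ((hτ.comp measurable_snd).mul
      (hf.measurable.comp (measurable_fst.sub measurable_snd))).stronglyMeasurable

lemma aux_conv (ρ τ f : E → ℝ) (hρm : Measurable ρ) (hτm : Measurable τ)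
    (hρnn : ∀ x, 0 ≤ ρ x) (hτnn : ∀ x, 0 ≤ τ x)
    (hρi : Integrable ρ) (hτi : Integrable τ) (hτ1 : (∫ y, τ y) = 1)
    (hfc : Continuous f) (hfnn : ∀ z, 0 ≤ f z) {R : ℝ} (hfR : ∀ z, f z ≤ R) :
    (∫⁻ x, ∫⁻ y, ENNReal.ofReal (ρ x * τ y * f (x - y))) =
      ENNReal.ofReal (∫ x, ρ x * ∫ y, τ y * f (x - y)) := by
  have hR0 : 0 ≤ R := le_trans (hfnn 0) (hfR 0)
  have habs : ∀ z, |f z| ≤ R := fun z => abs_le.2 ⟨by linarith [hfnn z], hfR z⟩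
  have hτf : ∀ x : E, Integrable fun y => τ y * f (x - y) := fun x =>
    aux_int_mul_bdd hτi ((hfc.comp (continuous_const.sub continuous_id)).aestronglyMeasurable)
      (fun y => habs _)
  set F : E → ℝ := fun x => ∫ y, τ y * f (x - y) with hF
  have hFnn : ∀ x, 0 ≤ F x := fun x =>
    integral_nonneg fun y => mul_nonneg (hτnn y) (hfnn _)
  have hFle : ∀ x, F x ≤ R := by
    intro x
    calc F x ≤ ∫ y, τ y * R :=
          integral_mono (hτf x) (hτi.mul_const R)
            (fun y => mul_le_mul_of_nonneg_left (hfR _) (hτnn y))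
      _ = R := by rw [integral_mul_const, hτ1, one_mul]
  have hFm : StronglyMeasurable F := aux_meas_param τ f hτm hfc volume
  have hρF : Integrable fun x => ρ x * F x :=
    aux_int_mul_bdd hρi hFm.aestronglyMeasurable
      (fun x => abs_le.2 ⟨by linarith [hFnn x], hFle x⟩)
  have inner : ∀ x : E, (∫⁻ y, ENNReal.ofReal (ρ x * τ y * f (x - y)))
      = ENNReal.ofReal (ρ x * F x) := by
    intro x
    simp only [mul_assoc]
    rw [← ofReal_integral_eq_lintegral_ofReal ((hτf x).const_mul (ρ x))
      (Filter.Eventually.of_forall fun y => mul_nonneg (hρnn x)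
        (mul_nonneg (hτnn y) (hfnn _))), integral_const_mul]
  calc (∫⁻ x, ∫⁻ y, ENNReal.ofReal (ρ x * τ y * f (x - y)))
      = ∫⁻ x, ENNReal.ofReal (ρ x * F x) := lintegral_congr inner
    _ = ENNReal.ofReal (∫ x, ρ x * F x) :=
        (ofReal_integral_eq_lintegral_ofReal hρF
          (Filter.Eventually.of_forall fun x => mul_nonneg (hρnn x) (hFnn x))).symm

lemma aux_supK (σ₁ σ₂ K : E → ℝ) (hσ₁m : Measurable σ₁) (hσ₂m : Measurable σ₂)
    (hσ₁nn : ∀ x, 0 ≤ σ₁ x) (hσ₂nn : ∀ x, 0 ≤ σ₂ x)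
    (hKc : Continuous K) (hKnn : ∀ z, 0 ≤ K z) :
    (∫⁻ x, ∫⁻ y, ENNReal.ofReal (σ₁ x * σ₂ y * K (x - y))) =
      ⨆ R : ℕ, ∫⁻ x, ∫⁻ y, ENNReal.ofReal (σ₁ x * σ₂ y * min (K (x - y)) R) := by
  have hmono : ∀ x y : E, Monotone fun R : ℕ =>
      ENNReal.ofReal (σ₁ x * σ₂ y * min (K (x - y)) R) := by
    intro x y R S hRS
    apply ENNReal.ofReal_le_ofReal
    apply mul_le_mul_of_nonneg_left _ (mul_nonneg (hσ₁nn x) (hσ₂nn y))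
    exact min_le_min le_rfl (by exact_mod_cast hRS)
  have hptsup : ∀ x y : E, (⨆ R : ℕ, ENNReal.ofReal (σ₁ x * σ₂ y * min (K (x - y)) R))
      = ENNReal.ofReal (σ₁ x * σ₂ y * K (x - y)) := by
    intro x y
    apply le_antisymm
    · apply iSup_le fun R => ENNReal.ofReal_le_ofReal ?_
      exact mul_le_mul_of_nonneg_left (min_le_left _ _)
        (mul_nonneg (hσ₁nn x) (hσ₂nn y))
    · have : min (K (x - y)) (⌈K (x - y)⌉₊ : ℝ) = K (x - y) :=
        min_eq_left (Nat.le_ceil _)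
      calc ENNReal.ofReal (σ₁ x * σ₂ y * K (x - y))
          = ENNReal.ofReal (σ₁ x * σ₂ y * min (K (x - y)) (⌈K (x - y)⌉₊ : ℝ)) := by rw [this]
        _ ≤ _ := le_iSup (fun R : ℕ => ENNReal.ofReal (σ₁ x * σ₂ y * min (K (x - y)) R)) _
  have hmeas : ∀ R : ℕ, Measurable fun p : E × E =>
      ENNReal.ofReal (σ₁ p.1 * σ₂ p.2 * min (K (p.1 - p.2)) R) := by
    intro R
    apply Measurable.ennreal_ofReal
    exact ((hσ₁m.comp measurable_fst).mul (hσ₂m.comp measurable_snd)).mul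
      (((hKc.measurable.comp (measurable_fst.sub measurable_snd))).min measurable_const)
  have hinner : ∀ x : E, (∫⁻ y, ENNReal.ofReal (σ₁ x * σ₂ y * K (x - y)))
      = ⨆ R : ℕ, ∫⁻ y, ENNReal.ofReal (σ₁ x * σ₂ y * min (K (x - y)) R) := by
    intro x
    rw [← lintegral_iSup (f := fun (R : ℕ) (y : E) =>
        ENNReal.ofReal (σ₁ x * σ₂ y * min (K (x - y)) R))
      (fun R => Measurable.ennreal_ofReal ((measurable_const.mul hσ₂m).mul
        ((hKc.measurable.comp (measurable_const.sub measurable_id)).min measurable_const)))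
      (fun R S hRS => fun y => hmono x y hRS)]
    exact lintegral_congr fun y => (hptsup x y).symm
  calc (∫⁻ x, ∫⁻ y, ENNReal.ofReal (σ₁ x * σ₂ y * K (x - y)))
      = ∫⁻ x, ⨆ R : ℕ, ∫⁻ y, ENNReal.ofReal (σ₁ x * σ₂ y * min (K (x - y)) R) :=
        lintegral_congr hinner
    _ = ⨆ R : ℕ, ∫⁻ x, ∫⁻ y, ENNReal.ofReal (σ₁ x * σ₂ y * min (K (x - y)) R) := by
        apply lintegral_iSup
        · exact fun R => Measurable.lintegral_prod_right
            (f := fun x y => ENNReal.ofReal (σ₁ x * σ₂ y * min (K (x - y)) R)) (hmeas R)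
        · exact fun R S hRS => fun x => lintegral_mono fun y => hmono x y hRS

lemma aux_claim1 (f : E → ℝ) (hfc : Continuous f) (hfnn : ∀ z, 0 ≤ f z)
    {R : ℝ} (hfR : ∀ z, f z ≤ R)
    (ρ τ : E → ℝ) (hρm : Measurable ρ) (hτm : Measurable τ)
    (hρnn : ∀ x, 0 ≤ ρ x) (hτnn : ∀ x, 0 ≤ τ x)
    (hρi : Integrable ρ) (hτi : Integrable τ)
    (hρ1 : (∫ x, ρ x) = 1) (hτ1 : (∫ y, τ y) = 1)
    {ε δ M : ℝ} (hε : 0 < ε)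
    (c : ℕ → E) (hcB : ∀ i, c i ∈ closedBall (0 : E) M)
    (Q : ℕ → Set E) (hQm : ∀ i, MeasurableSet (Q i))
    (hQd : Pairwise (Function.onFun Disjoint Q))
    (hQsub : ∀ i, Q i ⊆ closedBall (0 : E) M ∩ ball (c i) δ)
    (k : ℕ) (hQUk : (⋃ i ∈ Finset.range k, Q i) = closedBall (0 : E) M)
    (hδ : ∀ z ∈ closedBall (0 : E) (2 * M + 1), ∀ z' ∈ closedBall (0 : E) (2 * M + 1),
      dist z z' < δ → |f z - f z'| ≤ ε) :
    (∑ i ∈ Finset.range k,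
        (∫ x in Q i, ρ x) * (∫ y in closedBall (0 : E) M, τ y * f (c i - y))) - ε ≤
      ∫ x, ρ x * ∫ y, τ y * f (x - y) := by
  have hR0 : 0 ≤ R := le_trans (hfnn 0) (hfR 0)
  have habs : ∀ z, |f z| ≤ R := fun z => abs_le.2 ⟨by linarith [hfnn z], hfR z⟩
  set B := closedBall (0 : E) M with hB
  have hBmeas : MeasurableSet B := measurableSet_closedBall
  have hτf : ∀ x : E, Integrable fun y => τ y * f (x - y) := fun x =>
    aux_int_mul_bdd hτi ((hfc.comp (continuous_const.sub continuous_id)).aestronglyMeasurable)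
      (fun y => habs _)
  set F : E → ℝ := fun x => ∫ y, τ y * f (x - y) with hF
  set FB : E → ℝ := fun x => ∫ y in B, τ y * f (x - y) with hFB
  have hτfnn : ∀ x y : E, 0 ≤ τ y * f (x - y) := fun x y => mul_nonneg (hτnn y) (hfnn _)
  have hFnn : ∀ x, 0 ≤ F x := fun x => integral_nonneg fun y => hτfnn x y
  have hFBnn : ∀ x, 0 ≤ FB x := fun x => integral_nonneg fun y => hτfnn x y
  have hFBleF : ∀ x, FB x ≤ F x := fun x =>
    setIntegral_le_integral (hτf x) (Filter.Eventually.of_forall fun y => hτfnn x y)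
  have hFle : ∀ x, F x ≤ R := by
    intro x
    calc F x ≤ ∫ y, τ y * R :=
          integral_mono (hτf x) (hτi.mul_const R)
            (fun y => mul_le_mul_of_nonneg_left (hfR _) (hτnn y))
      _ = R := by rw [integral_mul_const, hτ1, one_mul]
  have hFm : StronglyMeasurable F := aux_meas_param τ f hτm hfc volume
  have hFBm : StronglyMeasurable FB := aux_meas_param τ f hτm hfc (volume.restrict B)
  have hρF : Integrable fun x => ρ x * F x :=
    aux_int_mul_bdd hρi hFm.aestronglyMeasurable
      (fun x => abs_le.2 ⟨by linarith [hFnn x], hFle x⟩)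
  have hρFB : Integrable fun x => ρ x * FB x :=
    aux_int_mul_bdd hρi hFBm.aestronglyMeasurable
      (fun x => abs_le.2 ⟨by linarith [hFBnn x], le_trans (hFBleF x) (hFle x)⟩)
  -- key pointwise bound
  have key : ∀ i, ∀ x ∈ Q i,
      (∫ y in B, τ y * f (c i - y)) - ε ≤ FB x := by
    intro i x hx
    obtain ⟨hxB, hxball⟩ := hQsub i hx
    have hstep : ∀ y ∈ B, τ y * f (c i - y) - ε * τ y ≤ τ y * f (x - y) := by
      intro y hy
      have hz : x - y ∈ closedBall (0 : E) (2 * M + 1) := by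
        rw [mem_closedBall_zero_iff]
        have h1 : ‖x‖ ≤ M := mem_closedBall_zero_iff.1 hxB
        have h2 : ‖y‖ ≤ M := mem_closedBall_zero_iff.1 hy
        calc ‖x - y‖ ≤ ‖x‖ + ‖y‖ := norm_sub_le _ _
          _ ≤ 2 * M + 1 := by linarith
      have hz' : c i - y ∈ closedBall (0 : E) (2 * M + 1) := by
        rw [mem_closedBall_zero_iff]
        have h1 : ‖c i‖ ≤ M := mem_closedBall_zero_iff.1 (hcB i)
        have h2 : ‖y‖ ≤ M := mem_closedBall_zero_iff.1 hy
        calc ‖c i - y‖ ≤ ‖c i‖ + ‖y‖ := norm_sub_le _ _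
          _ ≤ 2 * M + 1 := by linarith
      have hdist : dist (x - y) (c i - y) < δ := by
        rw [dist_sub_right]; exact mem_ball.1 hxball
      have habs2 := hδ (x - y) hz (c i - y) hz' hdist
      have h3 : f (c i - y) - ε ≤ f (x - y) := by
        have := abs_le.1 habs2; linarith [this.1]
      nlinarith [hτnn y]
    have hτB : (∫ y in B, τ y) ≤ 1 := by
      rw [← hτ1]
      exact setIntegral_le_integral hτi (Filter.Eventually.of_forall hτnn)
    calc (∫ y in B, τ y * f (c i - y)) - ε
        ≤ (∫ y in B, τ y * f (c i - y)) - ε * ∫ y in B, τ y := by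
          have h4 : (0:ℝ) ≤ ∫ y in B, τ y := integral_nonneg hτnn
          nlinarith
      _ = ∫ y in B, (τ y * f (c i - y) - ε * τ y) := by
          rw [integral_sub ((hτf (c i)).integrableOn) ((hτi.const_mul ε).integrableOn),
            integral_const_mul]
      _ ≤ ∫ y in B, τ y * f (x - y) :=
          setIntegral_mono_on
            (((hτf (c i)).integrableOn).sub ((hτi.const_mul ε).integrableOn))
            ((hτf x).integrableOn) hBmeas hstep
      _ = FB x := rfl
  have hQpw : Set.Pairwise ↑(Finset.range k) (Function.onFun Disjoint Q) := hQd.set_pairwise _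
  have hsum_eq : ∀ h : E → ℝ, Integrable h →
      (∑ i ∈ Finset.range k, ∫ x in Q i, h x) = ∫ x in B, h x := by
    intro h hh
    rw [← hQUk, integral_biUnion_finset (Finset.range k) (fun i _ => hQm i) hQpw
      (fun i _ => hh.integrableOn)]
  have ha_nn : ∀ i, 0 ≤ ∫ x in Q i, ρ x := fun i => integral_nonneg hρnn
  have hsum_a : (∑ i ∈ Finset.range k, ∫ x in Q i, ρ x) ≤ 1 := by
    rw [hsum_eq ρ hρi, ← hρ1]
    exact setIntegral_le_integral hρi (Filter.Eventually.of_forall hρnn)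
  have hstep4 : ∀ i ∈ Finset.range k,
      (∫ x in Q i, ρ x) * (∫ y in B, τ y * f (c i - y)) - ε * (∫ x in Q i, ρ x) ≤
        ∫ x in Q i, ρ x * FB x := by
    intro i _
    have h1 : (∫ x in Q i, ρ x * ((∫ y in B, τ y * f (c i - y)) - ε)) ≤
        ∫ x in Q i, ρ x * FB x :=
      setIntegral_mono_on ((hρi.mul_const _).integrableOn) (hρFB.integrableOn) (hQm i)
        (fun x hx => mul_le_mul_of_nonneg_left (key i x hx) (hρnn x))
    rw [integral_mul_const] at h1
    nlinarith [h1]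
  have hρFBnn : ∀ x, 0 ≤ ρ x * FB x := fun x => mul_nonneg (hρnn x) (hFBnn x)
  calc (∑ i ∈ Finset.range k,
        (∫ x in Q i, ρ x) * (∫ y in B, τ y * f (c i - y))) - ε
      ≤ (∑ i ∈ Finset.range k,
        (∫ x in Q i, ρ x) * (∫ y in B, τ y * f (c i - y))) -
          ε * ∑ i ∈ Finset.range k, ∫ x in Q i, ρ x := by nlinarith [hsum_a]
    _ = ∑ i ∈ Finset.range k,
        ((∫ x in Q i, ρ x) * (∫ y in B, τ y * f (c i - y)) - ε * (∫ x in Q i, ρ x)) := by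
          rw [Finset.sum_sub_distrib, Finset.mul_sum]
    _ ≤ ∑ i ∈ Finset.range k, ∫ x in Q i, ρ x * FB x := Finset.sum_le_sum hstep4
    _ = ∫ x in B, ρ x * FB x := hsum_eq _ hρFB
    _ ≤ ∫ x, ρ x * FB x :=
        setIntegral_le_integral hρFB (Filter.Eventually.of_forall hρFBnn)
    _ ≤ ∫ x, ρ x * F x :=
        integral_mono hρFB hρF (fun x => mul_le_mul_of_nonneg_left (hFBleF x) (hρnn x))

lemma aux_claim3 (f : E → ℝ) (hfc : Continuous f) (hfnn : ∀ z, 0 ≤ f z)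
    {R : ℝ} (hfR : ∀ z, f z ≤ R)
    (ρ τ : E → ℝ) (hρm : Measurable ρ) (hτm : Measurable τ)
    (hρnn : ∀ x, 0 ≤ ρ x) (hτnn : ∀ x, 0 ≤ τ x)
    (hρi : Integrable ρ) (hτi : Integrable τ)
    (hρ1 : (∫ x, ρ x) = 1) (hτ1 : (∫ y, τ y) = 1)
    {ε δ M : ℝ} (hε : 0 < ε)
    (c : ℕ → E) (hcB : ∀ i, c i ∈ closedBall (0 : E) M)
    (Q : ℕ → Set E) (hQm : ∀ i, MeasurableSet (Q i))
    (hQd : Pairwise (Function.onFun Disjoint Q))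
    (hQsub : ∀ i, Q i ⊆ closedBall (0 : E) M ∩ ball (c i) δ)
    (k : ℕ) (hQUk : (⋃ i ∈ Finset.range k, Q i) = closedBall (0 : E) M)
    (hδ : ∀ z ∈ closedBall (0 : E) (2 * M + 1), ∀ z' ∈ closedBall (0 : E) (2 * M + 1),
      dist z z' < δ → |f z - f z'| ≤ ε)
    (hT1 : (∫ x in (closedBall (0 : E) M)ᶜ, ρ x) ≤ ε)
    (hT2 : (∫ y in (closedBall (0 : E) M)ᶜ, τ y) ≤ ε) :
    (∫ x, ρ x * ∫ y, τ y * f (x - y)) ≤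
      (∑ i ∈ Finset.range k,
        (∫ x in Q i, ρ x) * (∫ y in closedBall (0 : E) M, τ y * f (c i - y))) +
        (2 * R + 1) * ε := by
  have hR0 : 0 ≤ R := le_trans (hfnn 0) (hfR 0)
  have habs : ∀ z, |f z| ≤ R := fun z => abs_le.2 ⟨by linarith [hfnn z], hfR z⟩
  set B := closedBall (0 : E) M with hB
  have hBmeas : MeasurableSet B := measurableSet_closedBall
  have hτf : ∀ x : E, Integrable fun y => τ y * f (x - y) := fun x =>
    aux_int_mul_bdd hτi ((hfc.comp (continuous_const.sub continuous_id)).aestronglyMeasurable)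
      (fun y => habs _)
  set F : E → ℝ := fun x => ∫ y, τ y * f (x - y) with hF
  set FB : E → ℝ := fun x => ∫ y in B, τ y * f (x - y) with hFB
  have hτfnn : ∀ x y : E, 0 ≤ τ y * f (x - y) := fun x y => mul_nonneg (hτnn y) (hfnn _)
  have hFnn : ∀ x, 0 ≤ F x := fun x => integral_nonneg fun y => hτfnn x y
  have hFBnn : ∀ x, 0 ≤ FB x := fun x => integral_nonneg fun y => hτfnn x y
  have hFBleF : ∀ x, FB x ≤ F x := fun x =>
    setIntegral_le_integral (hτf x) (Filter.Eventually.of_forall fun y => hτfnn x y)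
  have hFle : ∀ x, F x ≤ R := by
    intro x
    calc F x ≤ ∫ y, τ y * R :=
          integral_mono (hτf x) (hτi.mul_const R)
            (fun y => mul_le_mul_of_nonneg_left (hfR _) (hτnn y))
      _ = R := by rw [integral_mul_const, hτ1, one_mul]
  have hFm : StronglyMeasurable F := aux_meas_param τ f hτm hfc volume
  have hFBm : StronglyMeasurable FB := aux_meas_param τ f hτm hfc (volume.restrict B)
  have hρF : Integrable fun x => ρ x * F x :=
    aux_int_mul_bdd hρi hFm.aestronglyMeasurable
      (fun x => abs_le.2 ⟨by linarith [hFnn x], hFle x⟩)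
  have hρFB : Integrable fun x => ρ x * FB x :=
    aux_int_mul_bdd hρi hFBm.aestronglyMeasurable
      (fun x => abs_le.2 ⟨by linarith [hFBnn x], le_trans (hFBleF x) (hFle x)⟩)
  -- key pointwise bound (upper)
  have key : ∀ i, ∀ x ∈ Q i,
      FB x ≤ (∫ y in B, τ y * f (c i - y)) + ε := by
    intro i x hx
    obtain ⟨hxB, hxball⟩ := hQsub i hx
    have hstep : ∀ y ∈ B, τ y * f (x - y) ≤ τ y * f (c i - y) + ε * τ y := by
      intro y hy
      have hz : x - y ∈ closedBall (0 : E) (2 * M + 1) := by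
        rw [mem_closedBall_zero_iff]
        have h1 : ‖x‖ ≤ M := mem_closedBall_zero_iff.1 hxB
        have h2 : ‖y‖ ≤ M := mem_closedBall_zero_iff.1 hy
        calc ‖x - y‖ ≤ ‖x‖ + ‖y‖ := norm_sub_le _ _
          _ ≤ 2 * M + 1 := by linarith
      have hz' : c i - y ∈ closedBall (0 : E) (2 * M + 1) := by
        rw [mem_closedBall_zero_iff]
        have h1 : ‖c i‖ ≤ M := mem_closedBall_zero_iff.1 (hcB i)
        have h2 : ‖y‖ ≤ M := mem_closedBall_zero_iff.1 hy
        calc ‖c i - y‖ ≤ ‖c i‖ + ‖y‖ := norm_sub_le _ _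
          _ ≤ 2 * M + 1 := by linarith
      have hdist : dist (x - y) (c i - y) < δ := by
        rw [dist_sub_right]; exact mem_ball.1 hxball
      have habs2 := hδ (x - y) hz (c i - y) hz' hdist
      have h3 : f (x - y) ≤ f (c i - y) + ε := by
        have := abs_le.1 habs2; linarith [this.2]
      nlinarith [hτnn y]
    have hτB : (∫ y in B, τ y) ≤ 1 := by
      rw [← hτ1]
      exact setIntegral_le_integral hτi (Filter.Eventually.of_forall hτnn)
    have hτBnn : (0:ℝ) ≤ ∫ y in B, τ y := integral_nonneg hτnn
    calc FB x ≤ ∫ y in B, (τ y * f (c i - y) + ε * τ y) :=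
          setIntegral_mono_on ((hτf x).integrableOn)
            (((hτf (c i)).integrableOn).add ((hτi.const_mul ε).integrableOn)) hBmeas hstep
      _ = (∫ y in B, τ y * f (c i - y)) + ε * ∫ y in B, τ y := by
          rw [integral_add ((hτf (c i)).integrableOn) ((hτi.const_mul ε).integrableOn),
            integral_const_mul]
      _ ≤ (∫ y in B, τ y * f (c i - y)) + ε := by nlinarith
  have hQpw : Set.Pairwise ↑(Finset.range k) (Function.onFun Disjoint Q) := hQd.set_pairwise _
  have hsum_eq : ∀ h : E → ℝ, Integrable h →
      (∑ i ∈ Finset.range k, ∫ x in Q i, h x) = ∫ x in B, h x := by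
    intro h hh
    rw [← hQUk, integral_biUnion_finset (Finset.range k) (fun i _ => hQm i) hQpw
      (fun i _ => hh.integrableOn)]
  have ha_nn : ∀ i, 0 ≤ ∫ x in Q i, ρ x := fun i => integral_nonneg hρnn
  have hsum_a : (∑ i ∈ Finset.range k, ∫ x in Q i, ρ x) ≤ 1 := by
    rw [hsum_eq ρ hρi, ← hρ1]
    exact setIntegral_le_integral hρi (Filter.Eventually.of_forall hρnn)
  -- outer tail
  have houter : (∫ x, ρ x * F x) ≤ (∫ x in B, ρ x * F x) + R * ε := by
    have hsplit : (∫ x in B, ρ x * F x) + (∫ x in Bᶜ, ρ x * F x) = ∫ x, ρ x * F x :=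
      integral_add_compl hBmeas hρF
    have htail : (∫ x in Bᶜ, ρ x * F x) ≤ R * ε := by
      calc (∫ x in Bᶜ, ρ x * F x) ≤ ∫ x in Bᶜ, ρ x * R :=
            setIntegral_mono_on (hρF.integrableOn) ((hρi.mul_const R).integrableOn)
              hBmeas.compl
              (fun x _ => mul_le_mul_of_nonneg_left (hFle x) (hρnn x))
        _ = (∫ x in Bᶜ, ρ x) * R := integral_mul_const _ _
        _ ≤ ε * R := mul_le_mul_of_nonneg_right hT1 hR0
        _ = R * ε := mul_comm _ _
    linarith
  -- inner tail
  have hinner : ∀ x : E, F x ≤ FB x + R * ε := by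
    intro x
    have hsplit : FB x + (∫ y in Bᶜ, τ y * f (x - y)) = F x :=
      integral_add_compl hBmeas (hτf x)
    have htail : (∫ y in Bᶜ, τ y * f (x - y)) ≤ R * ε := by
      calc (∫ y in Bᶜ, τ y * f (x - y)) ≤ ∫ y in Bᶜ, τ y * R :=
            setIntegral_mono_on ((hτf x).integrableOn) ((hτi.mul_const R).integrableOn)
              hBmeas.compl
              (fun y _ => mul_le_mul_of_nonneg_left (hfR _) (hτnn y))
        _ = (∫ y in Bᶜ, τ y) * R := integral_mul_const _ _
        _ ≤ ε * R := mul_le_mul_of_nonneg_right hT2 hR0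
        _ = R * ε := mul_comm _ _
    linarith
  have hmid : (∫ x in B, ρ x * F x) ≤ (∫ x in B, ρ x * FB x) + R * ε := by
    have hρB : (∫ x in B, ρ x) ≤ 1 := by
      rw [← hρ1]
      exact setIntegral_le_integral hρi (Filter.Eventually.of_forall hρnn)
    have hρBnn : (0:ℝ) ≤ ∫ x in B, ρ x := integral_nonneg hρnn
    calc (∫ x in B, ρ x * F x) ≤ ∫ x in B, (ρ x * FB x + (R * ε) * ρ x) :=
          setIntegral_mono_on (hρF.integrableOn)
            ((hρFB.integrableOn).add ((hρi.const_mul (R * ε)).integrableOn)) hBmeas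
            (fun x _ => by nlinarith [hinner x, hρnn x])
      _ = (∫ x in B, ρ x * FB x) + (R * ε) * ∫ x in B, ρ x := by
          rw [integral_add (hρFB.integrableOn) ((hρi.const_mul (R * ε)).integrableOn),
            integral_const_mul]
      _ ≤ (∫ x in B, ρ x * FB x) + R * ε := by nlinarith [mul_nonneg hR0 hε.le, hρB, hρBnn]
  have hlast : (∫ x in B, ρ x * FB x) ≤
      (∑ i ∈ Finset.range k,
        (∫ x in Q i, ρ x) * (∫ y in B, τ y * f (c i - y))) + ε := by
    have hstep4 : ∀ i ∈ Finset.range k,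
        (∫ x in Q i, ρ x * FB x) ≤
          (∫ x in Q i, ρ x) * (∫ y in B, τ y * f (c i - y)) + ε * (∫ x in Q i, ρ x) := by
      intro i _
      have h1 : (∫ x in Q i, ρ x * FB x) ≤
          ∫ x in Q i, ρ x * ((∫ y in B, τ y * f (c i - y)) + ε) :=
        setIntegral_mono_on (hρFB.integrableOn) ((hρi.mul_const _).integrableOn) (hQm i)
          (fun x hx => mul_le_mul_of_nonneg_left (key i x hx) (hρnn x))
      rw [integral_mul_const] at h1
      nlinarith [h1]
    calc (∫ x in B, ρ x * FB x)
        = ∑ i ∈ Finset.range k, ∫ x in Q i, ρ x * FB x := (hsum_eq _ hρFB).symm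
      _ ≤ ∑ i ∈ Finset.range k,
          ((∫ x in Q i, ρ x) * (∫ y in B, τ y * f (c i - y)) + ε * (∫ x in Q i, ρ x)) :=
          Finset.sum_le_sum hstep4
      _ = (∑ i ∈ Finset.range k,
          (∫ x in Q i, ρ x) * (∫ y in B, τ y * f (c i - y))) +
            ε * ∑ i ∈ Finset.range k, ∫ x in Q i, ρ x := by
          rw [Finset.sum_add_distrib, Finset.mul_sum]
      _ ≤ _ := by nlinarith
  calc (∫ x, ρ x * F x) ≤ (∫ x in B, ρ x * F x) + R * ε := houter
    _ ≤ (∫ x in B, ρ x * FB x) + R * ε + R * ε := by linarith [hmid]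
    _ ≤ _ := by linarith [hlast]

lemma aux_tail (σ : E → ℝ) (hσi : Integrable σ) (hσ1 : (∫ x, σ x) = 1)
    (hσnn : ∀ x, 0 ≤ σ x) {ε : ℝ} (hε : 0 < ε) :
    ∃ N : ℕ, ∀ M : ℕ, N ≤ M → (∫ x in (closedBall (0 : E) M)ᶜ, σ x) ≤ ε := by
  have hmono : Monotone fun n : ℕ => closedBall (0 : E) (n : ℝ) := fun a b hab =>
    closedBall_subset_closedBall (by exact_mod_cast hab)
  have hU : (⋃ n : ℕ, closedBall (0 : E) (n : ℝ)) = univ := iUnion_closedBall_nat 0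
  have ht := tendsto_setIntegral_of_monotone (μ := volume) (f := σ)
    (fun n : ℕ => measurableSet_closedBall) hmono (by rw [hU]; exact hσi.integrableOn)
  rw [hU, setIntegral_univ, hσ1] at ht
  have hev := ht.eventually (eventually_ge_nhds (show 1 - ε < 1 by linarith))
  obtain ⟨N, hN⟩ := eventually_atTop.1 hev
  refine ⟨N, fun M hM => ?_⟩
  have hsplit : (∫ x in closedBall (0 : E) M, σ x) + (∫ x in (closedBall (0 : E) M)ᶜ, σ x)
      = 1 := by rw [integral_add_compl measurableSet_closedBall hσi, hσ1]
  linarith [hN M hM]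

lemma aux_getD_zero {α : Type*} [Inhabited α] (l : List α) : l.getD 0 l.headI = l.headI := by
  cases l <;> simp

lemma aux_headI_mem {α : Type*} [Inhabited α] {l : List α} (h : l ≠ []) : l.headI ∈ l := by
  cases l with
  | nil => exact absurd rfl h
  | cons a t => exact List.mem_cons_self

lemma aux_core (f : E → ℝ) (hfc : Continuous f) (hfnn : ∀ z, 0 ≤ f z)
    {R : ℝ} (hfR : ∀ z, f z ≤ R)
    (ρ₁ ρ₂ : ℕ → E → ℝ) (σ₁ σ₂ : E → ℝ)
    (hρ₁m : ∀ n, Measurable (ρ₁ n)) (hρ₂m : ∀ n, Measurable (ρ₂ n))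
    (hρ₁nn : ∀ n x, 0 ≤ ρ₁ n x) (hρ₂nn : ∀ n x, 0 ≤ ρ₂ n x)
    (hρ₁i : ∀ n, Integrable (ρ₁ n)) (hρ₂i : ∀ n, Integrable (ρ₂ n))
    (hρ₁1 : ∀ n, (∫ x, ρ₁ n x) = 1) (hρ₂1 : ∀ n, (∫ x, ρ₂ n x) = 1)
    (hσ₁m : Measurable σ₁) (hσ₂m : Measurable σ₂)
    (hσ₁nn : ∀ x, 0 ≤ σ₁ x) (hσ₂nn : ∀ x, 0 ≤ σ₂ x)
    (hσ₁i : Integrable σ₁) (hσ₂i : Integrable σ₂)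
    (hσ₁1 : (∫ x, σ₁ x) = 1) (hσ₂1 : (∫ x, σ₂ x) = 1)
    (hweak₁ : ∀ g : E → ℝ, Measurable g → (∃ C, ∀ x, |g x| ≤ C) →
      Tendsto (fun n => ∫ x, ρ₁ n x * g x) atTop (nhds (∫ x, σ₁ x * g x)))
    (hweak₂ : ∀ g : E → ℝ, Measurable g → (∃ C, ∀ x, |g x| ≤ C) →
      Tendsto (fun n => ∫ x, ρ₂ n x * g x) atTop (nhds (∫ x, σ₂ x * g x)))
    {ε : ℝ} (hε : 0 < ε) :
    ∀ᶠ n in atTop, (∫ x, σ₁ x * ∫ y, σ₂ y * f (x - y)) - (2 * R + 3) * ε ≤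
      ∫ x, ρ₁ n x * ∫ y, ρ₂ n y * f (x - y) := by
  have hR0 : 0 ≤ R := le_trans (hfnn 0) (hfR 0)
  have habs : ∀ z, |f z| ≤ R := fun z => abs_le.2 ⟨by linarith [hfnn z], hfR z⟩
  -- choose the radius M controlling the tails of σ₁, σ₂
  obtain ⟨N₁, hN₁⟩ := aux_tail σ₁ hσ₁i hσ₁1 hσ₁nn hε
  obtain ⟨N₂, hN₂⟩ := aux_tail σ₂ hσ₂i hσ₂1 hσ₂nn hε
  set M : ℝ := ((max N₁ N₂ : ℕ) : ℝ) with hM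
  have hT1 : (∫ x in (closedBall (0 : E) M)ᶜ, σ₁ x) ≤ ε := hN₁ _ (le_max_left _ _)
  have hT2 : (∫ y in (closedBall (0 : E) M)ᶜ, σ₂ y) ≤ ε := hN₂ _ (le_max_right _ _)
  have hM0 : (0 : ℝ) ≤ M := Nat.cast_nonneg _
  -- uniform continuity of f on a large ball
  obtain ⟨δ, hδ0, hδ'⟩ := Metric.uniformContinuousOn_iff.1
    ((isCompact_closedBall (0 : E) (2 * M + 1)).uniformContinuousOn_of_continuous
      hfc.continuousOn) ε hε
  have hδ : ∀ z ∈ closedBall (0 : E) (2 * M + 1), ∀ z' ∈ closedBall (0 : E) (2 * M + 1),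
      dist z z' < δ → |f z - f z'| ≤ ε := by
    intro z hz z' hz' hd
    have := hδ' z hz z' hz' hd
    rw [Real.dist_eq] at this
    exact this.le
  -- finite cover of the ball by δ-balls
  obtain ⟨t, htB, htfin, htcov⟩ :=
    (isCompact_closedBall (0 : E) M).finite_cover_balls hδ0
  have hB0 : (0 : E) ∈ closedBall (0 : E) M := mem_closedBall_self hM0
  classical
  set L : List E := htfin.toFinset.toList with hLdef
  have hmemL : ∀ x, x ∈ L ↔ x ∈ t := by
    intro x; rw [hLdef, Finset.mem_toList, Set.Finite.mem_toFinset]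
  have hLne : L ≠ [] := by
    obtain ⟨cc, hcc, _⟩ := mem_iUnion₂.1 (htcov hB0)
    intro h
    have : cc ∈ L := (hmemL cc).2 hcc
    rw [h] at this
    exact absurd this List.not_mem_nil
  set k : ℕ := L.length with hk
  have hk0 : 0 < k := List.length_pos_iff.2 hLne
  set c : ℕ → E := fun i => L.getD i L.headI with hc
  have hcL : ∀ i, c i ∈ L := by
    intro i
    by_cases h : i < k
    · rw [hc]; simp only
      rw [List.getD_eq_getElem L L.headI h]
      exact List.getElem_mem h
    · rw [hc]; simp only
      rw [List.getD_eq_default L L.headI (not_lt.1 h)]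
      exact aux_headI_mem hLne
  have hcB : ∀ i, c i ∈ closedBall (0 : E) M := fun i => htB ((hmemL _).1 (hcL i))
  have hchigh : ∀ i, k ≤ i → c i = c 0 := by
    intro i hi
    show L.getD i L.headI = L.getD 0 L.headI
    rw [List.getD_eq_default L L.headI hi, aux_getD_zero L]
  set g : ℕ → Set E := fun i => closedBall (0 : E) M ∩ ball (c i) δ with hg
  set Q : ℕ → Set E := disjointed g with hQ
  have hgm : ∀ i, MeasurableSet (g i) := fun i => measurableSet_closedBall.inter
    measurableSet_ball
  have hQm : ∀ i, MeasurableSet (Q i) := MeasurableSet.disjointed hgm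
  have hQd : Pairwise (Function.onFun Disjoint Q) := disjoint_disjointed g
  have hQsub : ∀ i, Q i ⊆ closedBall (0 : E) M ∩ ball (c i) δ := disjointed_subset g
  have hQk : ∀ i, k ≤ i → Q i = ∅ := by
    intro i hi
    obtain ⟨m, rfl⟩ : ∃ m, i = m + 1 := Nat.exists_eq_succ_of_ne_zero (by omega)
    have hgg : g (m + 1) = g 0 := by
      show closedBall (0 : E) M ∩ ball (c (m + 1)) δ = closedBall (0 : E) M ∩ ball (c 0) δ
      rw [hchigh (m + 1) hi]
    have hle : g (m + 1) ≤ partialSups g m := by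
      rw [hgg]; exact le_partialSups_of_le g (Nat.zero_le m)
    have hds : Q (m + 1) = g (m + 1) \ partialSups g m := disjointed_add_one g m
    rw [hds]
    exact Set.diff_eq_empty.2 hle
  have hQU : (⋃ i, Q i) = closedBall (0 : E) M := by
    rw [hQ, iUnion_disjointed]
    apply Set.Subset.antisymm
    · exact iUnion_subset fun i => inter_subset_left
    · intro x hx
      obtain ⟨cc, hcc, hxball⟩ := mem_iUnion₂.1 (htcov hx)
      obtain ⟨j, hj, hjeq⟩ := List.mem_iff_getElem.1 ((hmemL cc).2 hcc)
      refine mem_iUnion.2 ⟨j, hx, ?_⟩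
      show x ∈ ball (c j) δ
      rw [hc]; simp only
      rw [List.getD_eq_getElem L L.headI hj, hjeq]
      exact hxball
  have hQUk : (⋃ i ∈ Finset.range k, Q i) = closedBall (0 : E) M := by
    rw [← hQU]
    apply Set.Subset.antisymm (iUnion₂_subset fun i _ => subset_iUnion Q i)
    intro x hx
    obtain ⟨i, hi⟩ := mem_iUnion.1 hx
    by_cases h : i < k
    · exact mem_iUnion₂.2 ⟨i, Finset.mem_range.2 h, hi⟩
    · rw [hQk i (not_lt.1 h)] at hi
      exact absurd hi (notMem_empty x)
  -- convergence of the test integrals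
  have ha : ∀ i, Tendsto (fun n => ∫ x in Q i, ρ₁ n x) atTop (𝓝 (∫ x in Q i, σ₁ x)) := by
    intro i
    have hind : ∀ ρ : E → ℝ, (∫ x, ρ x * (Q i).indicator (fun _ => (1 : ℝ)) x)
        = ∫ x in Q i, ρ x := by
      intro ρ
      rw [← integral_indicator (hQm i)]
      congr 1; funext x
      by_cases hx : x ∈ Q i <;> simp [hx]
    have h2 := hweak₁ ((Q i).indicator fun _ => (1 : ℝ))
      (measurable_const.indicator (hQm i))
      ⟨1, fun x => by by_cases hx : x ∈ Q i <;> simp [hx]⟩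
    simp only [hind] at h2
    exact h2
  have hbc : ∀ i, Tendsto (fun n => ∫ y in closedBall (0 : E) M, ρ₂ n y * f (c i - y))
      atTop (𝓝 (∫ y in closedBall (0 : E) M, σ₂ y * f (c i - y))) := by
    intro i
    have hind : ∀ τ : E → ℝ,
        (∫ y, τ y * (closedBall (0 : E) M).indicator (fun y => f (c i - y)) y)
        = ∫ y in closedBall (0 : E) M, τ y * f (c i - y) := by
      intro τ
      rw [← integral_indicator measurableSet_closedBall]
      congr 1; funext y
      by_cases hy : y ∈ closedBall (0 : E) M <;> simp [hy]
    have h2 := hweak₂ ((closedBall (0 : E) M).indicator fun y => f (c i - y))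
      ((hfc.measurable.comp (measurable_const.sub measurable_id)).indicator
        measurableSet_closedBall)
      ⟨R, fun y => by
        by_cases hy : y ∈ closedBall (0 : E) M
        · simp only [indicator_of_mem hy]; exact habs _
        · simp [indicator_of_notMem hy, hR0]⟩
    simp only [hind] at h2
    exact h2
  have hsum_t : Tendsto (fun n => ∑ i ∈ Finset.range k,
      (∫ x in Q i, ρ₁ n x) * (∫ y in closedBall (0 : E) M, ρ₂ n y * f (c i - y)))
      atTop (𝓝 (∑ i ∈ Finset.range k,
      (∫ x in Q i, σ₁ x) * (∫ y in closedBall (0 : E) M, σ₂ y * f (c i - y)))) :=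
    tendsto_finset_sum _ fun i _ => (ha i).mul (hbc i)
  have hev := hsum_t.eventually (eventually_ge_nhds
    (show (∑ i ∈ Finset.range k,
      (∫ x in Q i, σ₁ x) * (∫ y in closedBall (0 : E) M, σ₂ y * f (c i - y))) - ε <
      ∑ i ∈ Finset.range k,
      (∫ x in Q i, σ₁ x) * (∫ y in closedBall (0 : E) M, σ₂ y * f (c i - y)) by linarith))
  filter_upwards [hev] with n hn
  have h1 := aux_claim1 f hfc hfnn hfR (ρ₁ n) (ρ₂ n) (hρ₁m n) (hρ₂m n) (hρ₁nn n) (hρ₂nn n)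
    (hρ₁i n) (hρ₂i n) (hρ₁1 n) (hρ₂1 n) hε c hcB Q hQm hQd hQsub k hQUk hδ
  have h3 := aux_claim3 f hfc hfnn hfR σ₁ σ₂ hσ₁m hσ₂m hσ₁nn hσ₂nn hσ₁i hσ₂i hσ₁1 hσ₂1
    hε c hcB Q hQm hQd hQsub k hQUk hδ hT1 hT2
  linarith

/-- Lower semi-continuity of the interaction energy with respect to weak `L¹`-convergence
of pairs of probability densities (weak convergence tested against bounded measurable
functions). -/
theorem stmt5 (d : ℕ) (K : EuclideanSpace ℝ (Fin d) → ℝ)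
    (hKc : Continuous K) (hKnn : ∀ z, 0 ≤ K z)
    (ρ₁ ρ₂ : ℕ → EuclideanSpace ℝ (Fin d) → ℝ)
    (σ₁ σ₂ : EuclideanSpace ℝ (Fin d) → ℝ)
    (hρ₁m : ∀ n, Measurable (ρ₁ n)) (hρ₂m : ∀ n, Measurable (ρ₂ n))
    (hρ₁nn : ∀ n x, 0 ≤ ρ₁ n x) (hρ₂nn : ∀ n x, 0 ≤ ρ₂ n x)
    (hρ₁i : ∀ n, Integrable (ρ₁ n)) (hρ₂i : ∀ n, Integrable (ρ₂ n))
    (hρ₁1 : ∀ n, (∫ x, ρ₁ n x) = 1) (hρ₂1 : ∀ n, (∫ x, ρ₂ n x) = 1)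
    (hσ₁m : Measurable σ₁) (hσ₂m : Measurable σ₂)
    (hσ₁nn : ∀ x, 0 ≤ σ₁ x) (hσ₂nn : ∀ x, 0 ≤ σ₂ x)
    (hσ₁i : Integrable σ₁) (hσ₂i : Integrable σ₂)
    (hσ₁1 : (∫ x, σ₁ x) = 1) (hσ₂1 : (∫ x, σ₂ x) = 1)
    (hweak₁ : ∀ g : EuclideanSpace ℝ (Fin d) → ℝ, Measurable g → (∃ C, ∀ x, |g x| ≤ C) →
      Tendsto (fun n => ∫ x, ρ₁ n x * g x) atTop (nhds (∫ x, σ₁ x * g x)))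
    (hweak₂ : ∀ g : EuclideanSpace ℝ (Fin d) → ℝ, Measurable g → (∃ C, ∀ x, |g x| ≤ C) →
      Tendsto (fun n => ∫ x, ρ₂ n x * g x) atTop (nhds (∫ x, σ₂ x * g x))) :
    (∫⁻ x, ∫⁻ y, ENNReal.ofReal (σ₁ x * σ₂ y * K (x - y))) ≤
      liminf (fun n => ∫⁻ x, ∫⁻ y, ENNReal.ofReal (ρ₁ n x * ρ₂ n y * K (x - y))) atTop := by
  rw [aux_supK σ₁ σ₂ K hσ₁m hσ₂m hσ₁nn hσ₂nn hKc hKnn]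
  apply iSup_le
  intro R
  have hfc : Continuous fun z : EuclideanSpace ℝ (Fin d) => min (K z) (R : ℝ) :=
    hKc.min continuous_const
  have hfnn : ∀ z : EuclideanSpace ℝ (Fin d), 0 ≤ min (K z) (R : ℝ) := fun z =>
    le_min (hKnn z) (Nat.cast_nonneg R)
  have hfR : ∀ z : EuclideanSpace ℝ (Fin d), min (K z) (R : ℝ) ≤ (R : ℝ) := fun z =>
    min_le_right _ _
  refine le_trans (le_of_eq (aux_conv σ₁ σ₂ (fun z => min (K z) (R : ℝ)) hσ₁m hσ₂m hσ₁nn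
    hσ₂nn hσ₁i hσ₂i hσ₂1 hfc hfnn hfR)) ?_
  set u : ℕ → ENNReal :=
    fun n => ∫⁻ x, ∫⁻ y, ENNReal.ofReal (ρ₁ n x * ρ₂ n y * K (x - y)) with hu
  have hAle : ∀ n, ENNReal.ofReal
      (∫ x, ρ₁ n x * ∫ y, ρ₂ n y * min (K (x - y)) (R : ℝ)) ≤ u n := by
    intro n
    refine le_trans (le_of_eq (aux_conv (ρ₁ n) (ρ₂ n) (fun z => min (K z) (R : ℝ))
      (hρ₁m n) (hρ₂m n) (hρ₁nn n) (hρ₂nn n) (hρ₁i n) (hρ₂i n) (hρ₂1 n)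
      hfc hfnn hfR).symm) ?_
    exact lintegral_mono fun x => lintegral_mono fun y =>
      ENNReal.ofReal_le_ofReal (mul_le_mul_of_nonneg_left (min_le_left _ _)
        (mul_nonneg (hρ₁nn n x) (hρ₂nn n y)))
  apply ENNReal.le_of_forall_pos_le_add
  intro ε' hε' _
  have hC : (0 : ℝ) < 2 * (R : ℝ) + 3 := by positivity
  set ε : ℝ := (ε' : ℝ) / (2 * (R : ℝ) + 3) with hεdef
  have hε : 0 < ε := div_pos (by exact_mod_cast hε') hC
  have hkey := aux_core (fun z => min (K z) (R : ℝ)) hfc hfnn hfR ρ₁ ρ₂ σ₁ σ₂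
    hρ₁m hρ₂m hρ₁nn hρ₂nn hρ₁i hρ₂i hρ₁1 hρ₂1 hσ₁m hσ₂m hσ₁nn hσ₂nn hσ₁i hσ₂i
    hσ₁1 hσ₂1 hweak₁ hweak₂ hε
  have hCε : (2 * (R : ℝ) + 3) * ε = (ε' : ℝ) := by
    rw [hεdef]; field_simp
  have hlim : ENNReal.ofReal
      ((∫ x, σ₁ x * ∫ y, σ₂ y * min (K (x - y)) (R : ℝ)) - (2 * (R : ℝ) + 3) * ε) ≤
      liminf u atTop := by
    refine le_liminf_of_le (by isBoundedDefault) ?_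
    filter_upwards [hkey] with n hn
    exact le_trans (ENNReal.ofReal_le_ofReal hn) (hAle n)
  have hsplit : (∫ x, σ₁ x * ∫ y, σ₂ y * min (K (x - y)) (R : ℝ)) =
      ((∫ x, σ₁ x * ∫ y, σ₂ y * min (K (x - y)) (R : ℝ)) - (2 * (R : ℝ) + 3) * ε) +
        (2 * (R : ℝ) + 3) * ε := by ring
  calc ENNReal.ofReal (∫ x, σ₁ x * ∫ y, σ₂ y * min (K (x - y)) (R : ℝ))
      ≤ ENNReal.ofReal
          ((∫ x, σ₁ x * ∫ y, σ₂ y * min (K (x - y)) (R : ℝ)) - (2 * (R : ℝ) + 3) * ε) +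
        ENNReal.ofReal ((2 * (R : ℝ) + 3) * ε) := by
        conv_lhs => rw [hsplit]
        exact ENNReal.ofReal_add_le
    _ ≤ liminf u atTop + ε' := by
        refine add_le_add hlim (le_of_eq ?_)
        rw [hCε, ENNReal.ofReal_coe_nnreal]
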